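/- If F is an A-coherent O_X-module on a locally ringed space X (i.e., F admits a global presentation O_X^m → O_X^n → F → 0 with m, n finite), then there exists a finitely presented module M over A = Γ(X, O_X) such that F is isomorphic to φ*(M~), where φ : X → Spec(A) is the canonical morphism and M~ is the quasi-coherent sheaf on Spec(A) associated to M. -/

import Mathlib

/-!
Statement 0. If `F` is an `A`-coherent `O_X`-module on a locally ringed space `X`
(i.e. `F` admits a global presentation `O_X^m → O_X^n → F → 0` with `m, n` finite),
then there exists a finitely presented module `M` over `A = Γ(X, O_X)` such that
`F ≅ φ^*(M~)`, where `φ : X → Spec A` is the canonical morphism.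

Since the composite functor `M ↦ φ^*(M~)` is (by the adjunctions `tilde ⊣ Γ` on
`Spec A` and `φ^* ⊣ φ_*`) the left adjoint of the global sections functor
`G ↦ Γ(X, G)` (an `A`-module), the isomorphism `F ≅ φ^*(M~)` is expressed
faithfully by the corresponding universal property: there is an `A`-linear map
`ε : M → Γ(X, F)` such that for every `O_X`-module `G`, composition with `ε`
induces a bijection `Hom_{O_X}(F, G) ≃ Hom_A(M, Γ(X, G))`.
-/

universe u

open CategoryTheory CategoryTheory.Limits Opposite AlgebraicGeometry TopologicalSpace

/-- The underlying sheaf of `RingCat` of a locally ringed space. -/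
noncomputable def AlgebraicGeometry.LocallyRingedSpace.ringCatSheaf
    (X : LocallyRingedSpace.{u}) : Sheaf (Opens.grothendieckTopology X.carrier) RingCat.{u} :=
  (sheafCompose (Opens.grothendieckTopology X.carrier) (forget₂ CommRingCat RingCat)).obj X.sheaf

/-- An `O_X`-module `F` is `A`-coherent if there are integers `m, n ≥ 1` and an exact
sequence `O_X^m → O_X^n → F → 0`. -/
noncomputable def SheafOfModules.ACoherent {X : TopCat.{u}} {R : Sheaf (Opens.grothendieckTopology X) RingCat.{u}}
    (F : SheafOfModules.{u} R) : Prop :=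
  ∃ (m n : ℕ) (u : SheafOfModules.free (R := R) (ULift.{u} (Fin m)) ⟶
      SheafOfModules.free (ULift.{u} (Fin n)))
    (p : SheafOfModules.free (ULift.{u} (Fin n)) ⟶ F) (w : u ≫ p = 0),
    1 ≤ m ∧ 1 ≤ n ∧ Epi p ∧ (ShortComplex.mk u p w).Exact

attribute [local instance] CategoryTheory.Abelian.hasFiniteBiproducts

namespace ACoh

universe v

open SheafOfModules

lemma my_total {I : Type u} [Fintype I] {C : Type*} [Category.{v} C] [Preadditive C]
    (f : I → C) [HasBiproduct f] :
    ∑ j : I, biproduct.π f j ≫ biproduct.ι f j = 𝟙 (⨁ f) := by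
  classical
  ext j
  simp [Preadditive.sum_comp, biproduct.ι_π, Category.assoc, Preadditive.comp_sum,
    dite_comp, comp_dite, Finset.sum_dite_eq, Finset.sum_dite_eq']

lemma map_map {C : Type*} [Category C] {R' : Cᵒᵖ ⥤ RingCat.{u}} (M : PresheafOfModules.{u} R')
    {U V W : Cᵒᵖ} (f : U ⟶ V) (g : V ⟶ W) (x : M.obj U) :
    M.map g (M.map f x) = M.map (f ≫ g) x := by
  exact (M.map_comp_apply f g x).symm

lemma map_id_apply {C : Type*} [Category C] {R' : Cᵒᵖ ⥤ RingCat.{u}} (M : PresheafOfModules.{u} R')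
    (U : Cᵒᵖ) (x : M.obj U) : M.map (𝟙 U) x = x := by
  rw [M.map_id]; rfl

variable {T : TopCat.{u}} {R : Sheaf (Opens.grothendieckTopology T) RingCat.{u}}

/-- Evaluation of sections at `⊤` is a bijection. -/
noncomputable def evEquiv (G : SheafOfModules.{u} R) : G.sections ≃ G.val.obj (op ⊤) where
  toFun s := PresheafOfModules.sections.eval s (op ⊤)
  invFun t := PresheafOfModules.sectionsMk
      (fun U ↦ G.val.map (homOfLE (le_top (a := U.unop))).op t)
      (fun U V f ↦ by
        rw [map_map]
        exact PresheafOfModules.congr_map_apply _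
          (Quiver.Hom.unop_inj (Subsingleton.elim _ _)) t)
  left_inv s := PresheafOfModules.sections_ext _ _
      (fun U ↦ PresheafOfModules.sections_property s _)
  right_inv t := by
    have h : (homOfLE (le_top (a := (op (⊤ : Opens T)).unop))).op = 𝟙 (op (⊤ : Opens T)) :=
      Quiver.Hom.unop_inj (Subsingleton.elim _ _)
    show G.val.map _ t = t
    rw [h, map_id_apply]

lemma sections_ext_top (G : SheafOfModules.{u} R) (s t : G.sections)
    (h : PresheafOfModules.sections.eval s (op ⊤) = PresheafOfModules.sections.eval t (op ⊤)) :
    s = t :=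
  (evEquiv G).injective h

lemma zero_val_app (M N : SheafOfModules.{u} R) (U : (Opens T)ᵒᵖ) :
    (0 : M ⟶ N).val.app U = 0 := rfl

variable (R) in
/-- The evaluation of morphisms at `⊤`, as an additive map. -/
noncomputable def evalHom (M N : SheafOfModules.{u} R) :
    (M ⟶ N) →+ (M.val.obj (op ⊤) →ₗ[R.val.obj (op ⊤)] N.val.obj (op ⊤)) :=
  AddMonoidHom.mk' (fun f ↦ (f.val.app (op ⊤)).hom) (fun f g ↦ by ext x; rfl)

variable (R) in
/-- The tautological global section of the free sheaf. -/
noncomputable def gen (I : Type u) (i : I) : (free (R := R) I).val.obj (op ⊤) :=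
  PresheafOfModules.sections.eval (freeSection (R := R) i) (op ⊤)

lemma app_gen {I : Type u} {G : SheafOfModules.{u} R} (g : free (R := R) I ⟶ G) (i : I) :
    g.val.app (op ⊤) (gen R I i) =
      PresheafOfModules.sections.eval ((G.freeHomEquiv g) i) (op ⊤) := by
  conv_rhs => rw [← Category.id_comp g]
  rfl

variable (R) in
noncomputable def inj (I : Type u) (i : I) : unit R ⟶ free (R := R) I :=
  Sigma.ι (fun _ ↦ unit R) i

variable (R) in
noncomputable def proj (I : Type u) [Fintype I] (i : I) : free (R := R) I ⟶ unit R :=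
  (biproduct.isoCoproduct (fun _ : I ↦ unit R)).inv ≫ biproduct.π _ i

lemma inj_proj {I : Type u} [Fintype I] [DecidableEq I] (i j : I) :
    inj R I i ≫ proj R I j = if i = j then 𝟙 (unit R) else 0 := by
  rw [inj, proj]
  delta SheafOfModules.free
  rw [← Category.assoc, biproduct.isoCoproduct_inv, colimit.ι_desc]
  exact biproduct.ι_π _ i j

lemma proj_inj_total {I : Type u} [Fintype I] :
    ∑ i : I, proj R I i ≫ inj R I i = 𝟙 (free (R := R) I) := by
  have h : ∀ i : I, proj R I i ≫ inj R I i =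
      (biproduct.isoCoproduct (fun _ : I ↦ unit R)).inv ≫
        ((biproduct.π (fun _ : I ↦ unit R) i ≫ biproduct.ι (fun _ : I ↦ unit R) i) ≫
        (biproduct.isoCoproduct (fun _ : I ↦ unit R)).hom) := by
    intro i
    rw [proj, inj]
    delta SheafOfModules.free
    rw [Category.assoc, Category.assoc, biproduct.isoCoproduct_hom,
      biproduct.ι_desc]
  delta SheafOfModules.free at h ⊢
  rw [Finset.sum_congr rfl (fun i _ ↦ h i), ← Preadditive.comp_sum, ← Preadditive.sum_comp,
    my_total, Category.id_comp, Iso.inv_hom_id]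

lemma app_inj_one {I : Type u} (i : I) :
    (inj R I i).val.app (op ⊤) (1 : R.val.obj (op ⊤)) = gen R I i := by
  conv_lhs => rw [← Category.comp_id (inj R I i)]
  rfl

lemma app_inj_eq_smul {I : Type u} (i : I) (a : R.val.obj (op ⊤)) :
    (inj R I i).val.app (op ⊤) a = a • gen R I i := by
  rw [← app_inj_one i]
  have h : a = a • (1 : R.val.obj (op ⊤)) := by rw [smul_eq_mul, mul_one]
  conv_lhs => rw [h]
  exact map_smul _ a _

variable (R) in
/-- The comparison map from the free module to the sections of the free sheaf. -/
noncomputable def lam (I : Type u) :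
    (I →₀ R.val.obj (op ⊤)) →ₗ[R.val.obj (op ⊤)] (free (R := R) I).val.obj (op ⊤) :=
  Finsupp.linearCombination _ (gen R I)

lemma lam_single {I : Type u} (i : I) (a : R.val.obj (op ⊤)) :
    lam R I (Finsupp.single i a) = a • gen R I i :=
  Finsupp.linearCombination_single _ _ _

lemma lam_surjective (I : Type u) [Fintype I] : Function.Surjective (lam R I) := by
  intro t
  refine ⟨∑ i : I, Finsupp.single i ((proj R I i).val.app (op ⊤) t), ?_⟩
  rw [map_sum]
  have h1 : ∀ i : I, lam R I (Finsupp.single i ((proj R I i).val.app (op ⊤) t)) =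
      (inj R I i).val.app (op ⊤) ((proj R I i).val.app (op ⊤) t) := by
    intro i
    exact (lam_single _ _).trans (app_inj_eq_smul _ _).symm
  rw [Finset.sum_congr rfl (fun i _ ↦ h1 i)]
  have h2 : ∀ i : I, (inj R I i).val.app (op ⊤) ((proj R I i).val.app (op ⊤) t) =
      evalHom R _ _ (proj R I i ≫ inj R I i) t := fun _ ↦ rfl
  rw [Finset.sum_congr rfl (fun i _ ↦ h2 i), ← LinearMap.sum_apply, ← map_sum,
    proj_inj_total]
  rfl

lemma app_proj_lam {I : Type u} [Fintype I] [DecidableEq I] (j : I)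
    (x : I →₀ R.val.obj (op ⊤)) :
    (proj R I j).val.app (op ⊤) (lam R I x) = x j := by
  induction x using Finsupp.induction_linear with
  | zero => simp; rfl
  | add f g hf hg => rw [map_add, map_add, Finsupp.add_apply, hf, hg]; rfl
  | single i a =>
    rw [lam_single, map_smul, Finsupp.single_apply]
    have h1 : (proj R I j).val.app (op ⊤) (gen R I i) =
        evalHom R _ _ (inj R I i ≫ proj R I j) (1 : R.val.obj (op ⊤)) := by
      rw [← app_inj_one i]; rfl
    rw [h1, inj_proj]
    split_ifs with h
    · have h2 : evalHom R (unit R) (unit R) (𝟙 (unit R)) (1 : R.val.obj (op ⊤)) =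
          (1 : R.val.obj (op ⊤)) := rfl
      rw [h2]; exact mul_one a
    · have h2 : evalHom R (unit R) (unit R) (0 : unit R ⟶ unit R) (1 : R.val.obj (op ⊤)) = 0 :=
        rfl
      rw [h2, smul_zero]; rfl

lemma lam_injective (I : Type u) [Fintype I] : Function.Injective (lam R I) := by
  classical
  intro x y hxy
  ext j
  rw [← app_proj_lam j x, ← app_proj_lam j y, hxy]

end ACoh

set_option maxHeartbeats 1000000 in
theorem acoherent_is_pullback_of_finitely_presented_module
    (X : LocallyRingedSpace.{u})
    (F : SheafOfModules.{u} X.ringCatSheaf)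
    (hF : F.ACoherent) :
    ∃ (M : ModuleCat.{u} (X.ringCatSheaf.val.obj (op ⊤))),
      Module.FinitePresentation (X.ringCatSheaf.val.obj (op ⊤)) M ∧
      ∃ (ε : M ⟶ F.val.obj (op ⊤)),
        ∀ (G : SheafOfModules.{u} X.ringCatSheaf),
          Function.Bijective (fun (f : F ⟶ G) => ε ≫ f.val.app (op ⊤)) := by
  classical
  obtain ⟨m, n, u, p, w, hm, hn, hp, hexact⟩ := hF
  let R := X.ringCatSheaf
  let Γu : ((SheafOfModules.free (R := R) (ULift.{u} (Fin m))).val.obj (op ⊤) : Type u) →ₗ[R.val.obj (op ⊤)] (SheafOfModules.free (R := R) (ULift.{u} (Fin n))).val.obj (op ⊤) :=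
    (u.val.app (op ⊤)).hom
  let Γp : ((SheafOfModules.free (R := R) (ULift.{u} (Fin n))).val.obj (op ⊤) : Type u) →ₗ[R.val.obj (op ⊤)] F.val.obj (op ⊤) :=
    (p.val.app (op ⊤)).hom
  let ψ : (ULift.{u} (Fin m) →₀ R.val.obj (op ⊤)) →ₗ[R.val.obj (op ⊤)]
      (SheafOfModules.free (R := R) (ULift.{u} (Fin n))).val.obj (op ⊤) :=
    Γu.comp (ACoh.lam R (ULift.{u} (Fin m)))
  let K : Submodule (R.val.obj (op ⊤))
      ((SheafOfModules.free (R := R) (ULift.{u} (Fin n))).val.obj (op ⊤)) :=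
    LinearMap.range ψ
  have hbij : Function.Bijective (ACoh.lam R (ULift.{u} (Fin n))) :=
    ⟨ACoh.lam_injective _, ACoh.lam_surjective _⟩
  haveI hNfp : Module.FinitePresentation (R.val.obj (op ⊤))
      ((SheafOfModules.free (R := R) (ULift.{u} (Fin n))).val.obj (op ⊤)) :=
    Module.finitePresentation_of_surjective (ACoh.lam R (ULift.{u} (Fin n))) hbij.2
      (by rw [LinearMap.ker_eq_bot.mpr hbij.1]; exact Submodule.fg_bot)
  have hKfg : K.FG := by
    have h1 : (⊤ : Submodule (R.val.obj (op ⊤)) (ULift.{u} (Fin m) →₀ R.val.obj (op ⊤))).FG :=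
      Module.Finite.fg_top
    have h2 := h1.map ψ
    rwa [Submodule.map_top] at h2
  haveI hMfp : Module.FinitePresentation (R.val.obj (op ⊤))
      (((SheafOfModules.free (R := R) (ULift.{u} (Fin n))).val.obj (op ⊤) : Type u) ⧸ K) :=
    Module.finitePresentation_of_surjective K.mkQ (Submodule.mkQ_surjective K)
      (by rw [Submodule.ker_mkQ]; exact hKfg)
  have hKle : K ≤ LinearMap.ker Γp := by
    rintro x ⟨y, rfl⟩
    have h3 : Γp (Γu (ACoh.lam R _ y)) = (u ≫ p).val.app (op ⊤) (ACoh.lam R _ y) := rfl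
    show Γp (Γu (ACoh.lam R _ y)) = 0
    rw [h3, w, ACoh.zero_val_app]
    rfl
  let ε : (((SheafOfModules.free (R := R) (ULift.{u} (Fin n))).val.obj (op ⊤) : Type u) ⧸ K)
      →ₗ[R.val.obj (op ⊤)] F.val.obj (op ⊤) := K.liftQ Γp hKle
  refine ⟨ModuleCat.of _ (_ ⧸ K), hMfp, ModuleCat.ofHom ε, ?_⟩
  intro G
  constructor
  · intro f f' h
    have h' : ∀ x, f.val.app (op ⊤) (ε x) = f'.val.app (op ⊤) (ε x) := by
      intro x
      exact LinearMap.congr_fun (congrArg ModuleCat.Hom.hom h) x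
    have hpf : p ≫ f = p ≫ f' := by
      apply G.freeHomEquiv.injective
      funext i
      apply ACoh.sections_ext_top
      rw [← ACoh.app_gen, ← ACoh.app_gen]
      have hcomp : ∀ (g : F ⟶ G) (z : (SheafOfModules.free (R := R) (ULift.{u} (Fin n))).val.obj (op ⊤)),
          (p ≫ g).val.app (op ⊤) z = g.val.app (op ⊤) (ε (K.mkQ z)) := fun _ _ ↦ rfl
      rw [hcomp f, hcomp f']
      exact h' _
    exact (cancel_epi p).mp hpf
  · intro σ
    let v : ULift.{u} (Fin n) → G.val.obj (op ⊤) := fun i ↦ σ (K.mkQ (ACoh.gen R _ i))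
    let g : SheafOfModules.free (R := R) (ULift.{u} (Fin n)) ⟶ G :=
      G.freeHomEquiv.symm (fun i ↦ (ACoh.evEquiv G).symm (v i))
    have hgv : ∀ i, g.val.app (op ⊤) (ACoh.gen R _ i) = v i := by
      intro i
      rw [ACoh.app_gen]
      have h4 : G.freeHomEquiv g = fun i ↦ (ACoh.evEquiv G).symm (v i) :=
        G.freeHomEquiv.apply_symm_apply _
      rw [h4]
      exact (ACoh.evEquiv G).apply_symm_apply (v i)
    have hΓg : ∀ t : (SheafOfModules.free (R := R) (ULift.{u} (Fin n))).val.obj (op ⊤),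
        g.val.app (op ⊤) t = σ (K.mkQ t) := by
      intro t
      obtain ⟨x, rfl⟩ := ACoh.lam_surjective (R := R) (ULift.{u} (Fin n)) t
      induction x using Finsupp.induction_linear with
      | zero => simp only [map_zero]
      | add a b ha hb => simp only [map_add]; rw [ha, hb]
      | single i a => simp only [ACoh.lam_single, map_smul]; rw [hgv i]
    have hug : u ≫ g = 0 := by
      apply G.freeHomEquiv.injective
      funext i
      apply ACoh.sections_ext_top
      rw [← ACoh.app_gen, ← ACoh.app_gen]
      have h5 : (u ≫ g).val.app (op ⊤) (ACoh.gen R _ i) =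
          g.val.app (op ⊤) (Γu (ACoh.gen R _ i)) := rfl
      rw [h5, hΓg, ACoh.zero_val_app]
      have h6 : K.mkQ (Γu (ACoh.gen R _ i)) = 0 := by
        apply (Submodule.Quotient.mk_eq_zero K).mpr
        refine ⟨Finsupp.single i 1, ?_⟩
        show Γu (ACoh.lam R _ (Finsupp.single i 1)) = _
        rw [ACoh.lam_single, one_smul]
      rw [h6, map_zero]
      rfl
    haveI hepi : Epi (ShortComplex.mk u p w).g := hp
    obtain ⟨f, hf⟩ := hexact.desc' g hug
    refine ⟨f, ?_⟩
    show ModuleCat.ofHom ε ≫ f.val.app (op ⊤) = σ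
    apply ModuleCat.hom_ext
    apply LinearMap.ext
    intro x
    obtain ⟨z, rfl⟩ := Submodule.mkQ_surjective K x
    show f.val.app (op ⊤) (ε (K.mkQ z)) = σ (K.mkQ z)
    have h7 : ε (K.mkQ z) = Γp z := rfl
    have h9 : p ≫ f = g := hf
    have h10 : f.val.app (op ⊤) (Γp z) = g.val.app (op ⊤) z := by rw [← h9]; rfl
    exact (congrArg (f.val.app (op ⊤)) h7).trans (h10.trans (hΓg z))
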